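/- For all q ∈ (1, 2], 2^q·q² - 5q·2^q + 6·2^q + 4q² - 2q - 6 ≥ 0. -/
import Mathlib

theorem concavity_boundary_ineq (q : ℝ) (hq1 : 1 < q) (hq2 : q ≤ 2) :
    0 ≤ (2:ℝ) ^ q * q ^ 2 - 5 * q * (2:ℝ) ^ q + 6 * (2:ℝ) ^ q + 4 * q ^ 2 - 2 * q - 6 := by
  have h2 : (2:ℝ) ≤ (2:ℝ) ^ q := by
    calc (2:ℝ) = (2:ℝ) ^ (1:ℝ) := (Real.rpow_one 2).symm
    _ ≤ (2:ℝ) ^ q := Real.rpow_le_rpow_of_exponent_le one_le_two hq1.le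
  have hpos : 0 ≤ q ^ 2 - 5 * q + 6 := by nlinarith
  nlinarith [mul_le_mul_of_nonneg_right h2 hpos, sq_nonneg (q - 1)]
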